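/- Let G be an n-vertex graph containing no cycle of length at most 2t. Then G has at most O(n^{1+1/t}) edges (the Moore bound): specifically |E(G)| ≤ n^{1+1/t} + n. -/

import Mathlib

open SimpleGraph



lemma edge_start {V : Type*} {G : SimpleGraph V} {v w : V} (q : G.Walk v w) (hq : q.IsPath)
    (he : s(w, v) ∈ q.edges) : q.length = 1 := by
  cases q with
  | nil => simp at he
  | @cons _ b _ h q' =>
    rw [Walk.edges_cons, List.mem_cons] at he
    rcases he with he | he
    · rw [Sym2.eq_iff] at he
      rcases he with ⟨rfl, rfl⟩ | ⟨rfl, -⟩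
      · exact absurd h (G.irrefl)
      · have hnil : q' = Walk.nil := Walk.isPath_iff_eq_nil.mp hq.of_cons
        subst hnil; simp
    · exact absurd (Walk.snd_mem_support_of_mem_edges q' he)
        ((Walk.cons_isPath_iff _ _).mp hq).2

/-- If `u ~ v` and `q` is a `u,v`-path which is not the single edge, we get a cycle of
length `q.length + 1`. -/
lemma cycle_single {V : Type*} [DecidableEq V] {G : SimpleGraph V} {u v : V} (h : G.Adj u v)
    (q : G.Walk u v) (hq : q.IsPath) (hne : q.length ≠ 1) :
    ∃ (w : V) (c : G.Walk w w), c.IsCycle ∧ c.length ≤ q.length + 1 := by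
  have he : s(u, v) ∉ (q.reverse).edges := by
    intro he
    have := edge_start q.reverse hq.reverse he
    rw [Walk.length_reverse] at this
    exact hne this
  refine ⟨u, Walk.cons h (⟨q.reverse, hq.reverse⟩ : G.Path v u), ?_, ?_⟩
  · exact Path.cons_isCycle _ h he
  · simp [Walk.length_cons, Walk.length_reverse]

lemma measure_step {s s' m m' M : ℕ} (hm' : m' ≤ s')
    (hlex : s' < s ∨ (s' = s ∧ m' < m)) (hM : s * (s + 1) + m ≤ M + 1) :
    s' * (s' + 1) + m' ≤ M := by
  rcases hlex with h | ⟨rfl, h⟩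
  · nlinarith
  · omega

lemma isPath_ne_of_length_ne_zero {V : Type*} {G : SimpleGraph V} {a v : V} {p : G.Walk a v}
    (hp : p.IsPath) (h : p.length ≠ 0) : a ≠ v := by
  rintro rfl
  rw [Walk.isPath_iff_eq_nil.mp hp] at h
  simp at h

lemma cycle_of_two_paths {V : Type*} [DecidableEq V] {G : SimpleGraph V} :
    ∀ (M : ℕ) {u v : V} (p q : G.Walk u v), p.IsPath → q.IsPath → p ≠ q →
      (p.length + q.length) * (p.length + q.length + 1) + min p.length q.length ≤ M →
      ∃ (w : V) (c : G.Walk w w), c.IsCycle ∧ c.length ≤ p.length + q.length := by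
  intro M
  induction M with
  | zero =>
    intro u v p q hp hq hne hM
    exfalso
    have h1 : (p.length + q.length) * (p.length + q.length + 1) = 0 := by omega
    have h2 : p.length + q.length = 0 := by
      rcases Nat.mul_eq_zero.mp h1 with h | h
      · exact h
      · omega
    cases p with
    | nil =>
      cases q with
      | nil => exact hne rfl
      | cons _ _ => simp [Walk.length_cons] at h2
    | cons _ _ => simp [Walk.length_cons] at h2
  | succ M ih =>
    intro u v p q hp hq hne hM
    cases p with
    | nil => exact absurd (Walk.isPath_iff_eq_nil.mp hq).symm hne
    | @cons _ a _ hp₁ p' =>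
      cases q with
      | nil => simpa using Walk.isPath_iff_eq_nil.mp hp
      | @cons _ b _ hq₁ q' =>
        simp only [Walk.length_cons] at hM ⊢
        have hp' : p'.IsPath := hp.of_cons
        have hq' : q'.IsPath := hq.of_cons
        have hup : u ∉ p'.support := ((Walk.cons_isPath_iff _ _).mp hp).2
        have huq : u ∉ q'.support := ((Walk.cons_isPath_iff _ _).mp hq).2
        by_cases hab : a = b
        · subst hab
          have hpq' : p' ≠ q' := by rintro rfl; exact hne rfl
          obtain ⟨w, c, hc, hlen⟩ := ih p' q' hp' hq' hpq'
            (measure_step ((min_le_left _ _).trans (Nat.le_add_right _ _))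
              (Or.inl (by omega)) hM)
          exact ⟨w, c, hc, by omega⟩
        · by_cases hp0 : p'.length = 0
          · -- p is a single edge u-v
            cases p' with
            | cons _ _ => simp [Walk.length_cons] at hp0
            | nil =>
              by_cases hq1 : q'.length = 0
              · cases q' with
                | cons _ _ => simp [Walk.length_cons] at hq1
                | nil => exact absurd rfl hne
              · obtain ⟨w, c, hc, hlen⟩ := cycle_single hp₁ (Walk.cons hq₁ q') hq
                  (by simp only [Walk.length_cons]; omega)
                exact ⟨w, c, hc, by simp [Walk.length_cons] at hlen; omega⟩
          · by_cases hq0 : q'.length = 0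
            · cases q' with
              | cons _ _ => simp [Walk.length_cons] at hq0
              | nil =>
                obtain ⟨w, c, hc, hlen⟩ := cycle_single hq₁ (Walk.cons hp₁ p') hp
                  (by simp only [Walk.length_cons]; omega)
                exact ⟨w, c, hc, by simp [Walk.length_cons] at hlen; omega⟩
            · have hav : a ≠ v := isPath_ne_of_length_ne_zero hp' hp0
              have hbv : b ≠ v := isPath_ne_of_length_ne_zero hq' hq0
              by_cases haq : a ∈ q'.support
              · -- recurse on single edge u-a versus cons hq₁ (q'.takeUntil a)
                have hr : (q'.takeUntil a haq).IsPath := hq'.takeUntil haq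
                have hq₂len : (q'.dropUntil a haq).length ≠ 0 :=
                  fun h0 => hav (Walk.eq_of_length_eq_zero h0)
                have hlen_rq : (q'.takeUntil a haq).length + (q'.dropUntil a haq).length
                    = q'.length := by
                  have := congrArg Walk.length (Walk.take_spec q' haq)
                  rwa [Walk.length_append] at this
                have hsp : (Walk.cons hp₁ (Walk.nil : G.Walk a a)).IsPath := by
                  rw [Walk.cons_isPath_iff]
                  refine ⟨Walk.IsPath.nil, ?_⟩
                  simpa using hp₁.ne
                have hrp : (Walk.cons hq₁ (q'.takeUntil a haq)).IsPath := by
                  rw [Walk.cons_isPath_iff]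
                  exact ⟨hr, fun hu => huq (Walk.support_takeUntil_subset _ haq hu)⟩
                have hner : Walk.cons hp₁ (Walk.nil : G.Walk a a)
                    ≠ Walk.cons hq₁ (q'.takeUntil a haq) := by
                  intro h
                  have hsup := congrArg Walk.support h
                  rw [Walk.support_cons, Walk.support_cons, Walk.support_nil,
                    Walk.support_eq_cons (q'.takeUntil a haq)] at hsup
                  simp only [List.cons.injEq] at hsup
                  exact hab hsup.2.1
                obtain ⟨w, c, hc, hlen⟩ := ih _ _ hsp hrp hner
                  (measure_step ((min_le_left _ _).trans (Nat.le_add_right _ _))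
                    (Or.inl (by simp only [Walk.length_cons, Walk.length_nil]; omega)) hM)
                refine ⟨w, c, hc, ?_⟩
                simp only [Walk.length_cons, Walk.length_nil] at hlen
                omega
              · by_cases hbp : b ∈ p'.support
                · -- mirror of previous case
                  have hr : (p'.takeUntil b hbp).IsPath := hp'.takeUntil hbp
                  have hq₂len : (p'.dropUntil b hbp).length ≠ 0 :=
                    fun h0 => hbv (Walk.eq_of_length_eq_zero h0)
                  have hlen_rq : (p'.takeUntil b hbp).length + (p'.dropUntil b hbp).length
                      = p'.length := by
                    have := congrArg Walk.length (Walk.take_spec p' hbp)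
                    rwa [Walk.length_append] at this
                  have hsp : (Walk.cons hq₁ (Walk.nil : G.Walk b b)).IsPath := by
                    rw [Walk.cons_isPath_iff]
                    refine ⟨Walk.IsPath.nil, ?_⟩
                    simpa using hq₁.ne
                  have hrp : (Walk.cons hp₁ (p'.takeUntil b hbp)).IsPath := by
                    rw [Walk.cons_isPath_iff]
                    exact ⟨hr, fun hu => hup (Walk.support_takeUntil_subset _ hbp hu)⟩
                  have hner : Walk.cons hq₁ (Walk.nil : G.Walk b b)
                      ≠ Walk.cons hp₁ (p'.takeUntil b hbp) := by
                    intro h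
                    have hsup := congrArg Walk.support h
                    rw [Walk.support_cons, Walk.support_cons, Walk.support_nil,
                      Walk.support_eq_cons (p'.takeUntil b hbp)] at hsup
                    simp only [List.cons.injEq] at hsup
                    exact hab hsup.2.1.symm
                  obtain ⟨w, c, hc, hlen⟩ := ih _ _ hsp hrp hner
                    (measure_step ((min_le_left _ _).trans (Nat.le_add_right _ _))
                      (Or.inl (by simp only [Walk.length_cons, Walk.length_nil]; omega)) hM)
                  refine ⟨w, c, hc, ?_⟩
                  simp only [Walk.length_cons, Walk.length_nil] at hlen
                  omega
                · -- neither a ∈ q'.support nor b ∈ p'.support : rotate the shorter path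
                  by_cases hle : p'.length ≤ q'.length
                  · have hqt : (Walk.cons hp₁.symm (Walk.cons hq₁ q')).IsPath := by
                      rw [Walk.cons_isPath_iff]
                      refine ⟨hq, ?_⟩
                      rw [Walk.support_cons]
                      simp only [List.mem_cons]
                      rintro (rfl | h)
                      · exact hp₁.ne rfl
                      · exact haq h
                    have hne2 : p' ≠ Walk.cons hp₁.symm (Walk.cons hq₁ q') := by
                      intro h
                      apply hup
                      rw [h, Walk.support_cons, Walk.support_cons]
                      simp
                    have hLnew : (Walk.cons hp₁.symm (Walk.cons hq₁ q')).length
                        = q'.length + 2 := by simp [Walk.length_cons]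
                    have hkey : (p'.length + (Walk.cons hp₁.symm (Walk.cons hq₁ q')).length) *
                        (p'.length + (Walk.cons hp₁.symm (Walk.cons hq₁ q')).length + 1) +
                        min p'.length (Walk.cons hp₁.symm (Walk.cons hq₁ q')).length ≤ M := by
                      rw [hLnew, Nat.min_eq_left (by omega : p'.length ≤ q'.length + 2)]
                      rw [Nat.min_eq_left (by omega : p'.length + 1 ≤ q'.length + 1)] at hM
                      have hs : p'.length + (q'.length + 2)
                          = p'.length + 1 + (q'.length + 1) := by omega
                      rw [hs]
                      omega
                    obtain ⟨w, c, hc, hlen⟩ := ih _ _ hp' hqt hne2 hkey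
                    refine ⟨w, c, hc, ?_⟩
                    simp only [Walk.length_cons] at hlen
                    omega
                  · have hqt : (Walk.cons hq₁.symm (Walk.cons hp₁ p')).IsPath := by
                      rw [Walk.cons_isPath_iff]
                      refine ⟨hp, ?_⟩
                      rw [Walk.support_cons]
                      simp only [List.mem_cons]
                      rintro (rfl | h)
                      · exact hq₁.ne rfl
                      · exact hbp h
                    have hne2 : q' ≠ Walk.cons hq₁.symm (Walk.cons hp₁ p') := by
                      intro h
                      apply huq
                      rw [h, Walk.support_cons, Walk.support_cons]
                      simp
                    have hLnew : (Walk.cons hq₁.symm (Walk.cons hp₁ p')).length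
                        = p'.length + 2 := by simp [Walk.length_cons]
                    have hkey : (q'.length + (Walk.cons hq₁.symm (Walk.cons hp₁ p')).length) *
                        (q'.length + (Walk.cons hq₁.symm (Walk.cons hp₁ p')).length + 1) +
                        min q'.length (Walk.cons hq₁.symm (Walk.cons hp₁ p')).length ≤ M := by
                      rw [hLnew, Nat.min_eq_left (by omega : q'.length ≤ p'.length + 2)]
                      rw [Nat.min_eq_right (by omega : q'.length + 1 ≤ p'.length + 1)] at hM
                      have hs : q'.length + (p'.length + 2)
                          = p'.length + 1 + (q'.length + 1) := by omega
                      rw [hs]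
                      omega
                    obtain ⟨w, c, hc, hlen⟩ := ih _ _ hq' hqt hne2 hkey
                    refine ⟨w, c, hc, ?_⟩
                    simp only [Walk.length_cons] at hlen
                    omega




lemma exists_min_deg {V : Type*} [Fintype V] [DecidableEq V] (G : SimpleGraph V)
    [DecidableRel G.Adj] (d : ℕ) :
    ∀ s : Finset V, 2 * d * s.card < ∑ v ∈ s, (s.filter (G.Adj v ·)).card →
    ∃ s' : Finset V, s'.Nonempty ∧ ∀ v ∈ s', d < (s'.filter (G.Adj v ·)).card := by
  intro s
  induction s using Finset.strongInduction with
  | _ s ih =>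
    intro hsum
    by_cases hall : ∀ v ∈ s, d < (s.filter (G.Adj v ·)).card
    · refine ⟨s, ?_, hall⟩
      rcases s.eq_empty_or_nonempty with rfl | h
      · simp at hsum
      · exact h
    · push_neg at hall
      obtain ⟨v₀, hv₀, hdeg⟩ := hall
      apply ih (s.erase v₀) (Finset.erase_ssubset hv₀)
      -- sum over s splits
      have hsplit : (s.filter (G.Adj v₀ ·)).card
          + ∑ v ∈ s.erase v₀, (s.filter (G.Adj v ·)).card
          = ∑ v ∈ s, (s.filter (G.Adj v ·)).card :=
        Finset.add_sum_erase s (fun v => (s.filter (G.Adj v ·)).card) hv₀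
      have hterm : ∀ v ∈ s.erase v₀, (s.filter (G.Adj v ·)).card
          ≤ ((s.erase v₀).filter (G.Adj v ·)).card + (if G.Adj v v₀ then 1 else 0) := by
        intro v _
        by_cases hadj : G.Adj v v₀
        · simp only [hadj, if_true]
          have hsub : s.filter (G.Adj v ·) ⊆ insert v₀ ((s.erase v₀).filter (G.Adj v ·)) := by
            intro x hx
            rw [Finset.mem_filter] at hx
            rcases eq_or_ne x v₀ with rfl | hxv
            · exact Finset.mem_insert_self _ _
            · refine Finset.mem_insert_of_mem ?_
              rw [Finset.mem_filter]
              exact ⟨Finset.mem_erase.mpr ⟨hxv, hx.1⟩, hx.2⟩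
          exact (Finset.card_le_card hsub).trans (Finset.card_insert_le _ _)
        · simp only [hadj, if_false, add_zero]
          apply Finset.card_le_card
          intro x hx
          rw [Finset.mem_filter] at hx ⊢
          have hxv : x ≠ v₀ := by rintro rfl; exact hadj hx.2
          exact ⟨Finset.mem_erase.mpr ⟨hxv, hx.1⟩, hx.2⟩
      have hsum2 : ∑ v ∈ s.erase v₀, (s.filter (G.Adj v ·)).card
          ≤ (∑ v ∈ s.erase v₀, ((s.erase v₀).filter (G.Adj v ·)).card)
            + ((s.erase v₀).filter (fun v => G.Adj v v₀)).card := by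
        calc ∑ v ∈ s.erase v₀, (s.filter (G.Adj v ·)).card
            ≤ ∑ v ∈ s.erase v₀, (((s.erase v₀).filter (G.Adj v ·)).card
                + (if G.Adj v v₀ then 1 else 0)) := Finset.sum_le_sum hterm
          _ = (∑ v ∈ s.erase v₀, ((s.erase v₀).filter (G.Adj v ·)).card)
                + ∑ v ∈ s.erase v₀, (if G.Adj v v₀ then 1 else 0) := Finset.sum_add_distrib
          _ = _ := by rw [Finset.sum_boole]; norm_cast
      have hback : ((s.erase v₀).filter (fun v => G.Adj v v₀)).card
          ≤ (s.filter (G.Adj v₀ ·)).card := by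
        apply Finset.card_le_card
        intro x hx
        rw [Finset.mem_filter] at hx ⊢
        exact ⟨Finset.mem_of_mem_erase hx.1, hx.2.symm⟩
      have hc : s.card = (s.erase v₀).card + 1 := by
        rw [Finset.card_erase_of_mem hv₀]
        have := Finset.card_pos.mpr ⟨v₀, hv₀⟩
        omega
      have hmul : 2 * d * s.card = 2 * d * (s.erase v₀).card + 2 * d := by rw [hc]; ring
      omega

section PathCounting

variable {V : Type*} [Fintype V] [DecidableEq V] {G : SimpleGraph V} [DecidableRel G.Adj]

def extFinset (G : SimpleGraph V) [DecidableRel G.Adj] (s : Finset V) {u : V}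
    (x : Σ v : V, G.Walk v u) : Finset (Σ v : V, G.Walk v u) :=
  (s.filter (fun w => G.Adj x.1 w ∧ w ∉ x.2.support)).attach.image
    (fun w => ⟨w.1, Walk.cons ((Finset.mem_filter.mp w.2).2.1).symm x.2⟩)

def pathFinset (G : SimpleGraph V) [DecidableRel G.Adj] (s : Finset V) (u : V) :
    ℕ → Finset (Σ v : V, G.Walk v u)
  | 0 => {⟨u, Walk.nil⟩}
  | (k+1) => (pathFinset G s u k).biUnion (extFinset G s)

lemma pathFinset_spec {s : Finset V} {u : V} (hu : u ∈ s) :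
    ∀ k, ∀ x ∈ pathFinset G s u k,
      x.2.IsPath ∧ x.2.length = k ∧ ∀ y ∈ x.2.support, y ∈ s := by
  intro k
  induction k with
  | zero =>
    intro x hx
    rw [pathFinset, Finset.mem_singleton] at hx
    subst hx
    refine ⟨Walk.IsPath.nil, rfl, ?_⟩
    intro y hy
    rw [Walk.support_nil, List.mem_singleton] at hy
    subst hy; exact hu
  | succ k ihk =>
    intro x hx
    rw [pathFinset, Finset.mem_biUnion] at hx
    obtain ⟨a, ha, hx⟩ := hx
    rw [extFinset, Finset.mem_image] at hx
    obtain ⟨w, hw, rfl⟩ := hx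
    obtain ⟨hpath, hlen, hsupp⟩ := ihk a ha
    have hwmem := Finset.mem_filter.mp w.2
    refine ⟨?_, ?_, ?_⟩
    · rw [Walk.cons_isPath_iff]; exact ⟨hpath, hwmem.2.2⟩
    · simp [Walk.length_cons, hlen]
    · intro y hy
      rw [Walk.support_cons] at hy
      rcases List.mem_cons.mp hy with rfl | hy
      · exact hwmem.1
      · exact hsupp y hy

lemma bad_eq_getVert {t : ℕ}
    (hgirth : ∀ (w : V) (c : G.Walk w w), c.IsCycle → 2 * t < c.length)
    {v u w : V} {p : G.Walk v u} (hp : p.IsPath) (hlen : p.length + 1 ≤ t)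
    (hadj : G.Adj v w) (hw : w ∈ p.support) : p.getVert 1 = w := by
  by_cases he : s(w, v) ∈ (p.takeUntil w hw).edges
  · have h1 : (p.takeUntil w hw).length = 1 := edge_start _ (hp.takeUntil hw) he
    conv_lhs => rw [← Walk.take_spec p hw]
    rw [Walk.getVert_append, h1]
    simp
  · exfalso
    have hc := Path.cons_isCycle ⟨p.takeUntil w hw, hp.takeUntil hw⟩ hadj.symm he
    have := hgirth w _ hc
    have hl : (p.takeUntil w hw).length ≤ p.length := Walk.length_takeUntil_le p hw
    simp only [Walk.length_cons] at this
    omega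

lemma extFinset_card {t d : ℕ}
    (hgirth : ∀ (w : V) (c : G.Walk w w), c.IsCycle → 2 * t < c.length)
    {s : Finset V} (hdeg : ∀ v ∈ s, d < (s.filter (G.Adj v ·)).card)
    {u : V} (x : Σ v : V, G.Walk v u) (hp : x.2.IsPath) (hlen : x.2.length + 1 ≤ t)
    (hsupp : ∀ y ∈ x.2.support, y ∈ s) :
    d ≤ (extFinset G s x).card := by
  obtain ⟨v, p⟩ := x
  have hcard : (extFinset G s ⟨v, p⟩).card
      = ((s.filter (fun w => G.Adj v w ∧ w ∉ p.support))).card := by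
    rw [extFinset, Finset.card_image_of_injective _
      (fun w₁ w₂ h => Subtype.ext (congrArg Sigma.fst h)), Finset.card_attach]
  have hbad : (s.filter (fun w => G.Adj v w ∧ w ∈ p.support)).card ≤ 1 := by
    rw [Finset.card_le_one]
    intro w₁ h₁ w₂ h₂
    rw [Finset.mem_filter] at h₁ h₂
    rw [← bad_eq_getVert hgirth hp hlen h₁.2.1 h₁.2.2,
        ← bad_eq_getVert hgirth hp hlen h₂.2.1 h₂.2.2]
  have hsub : s.filter (G.Adj v ·) ⊆ (s.filter (fun w => G.Adj v w ∧ w ∉ p.support))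
      ∪ (s.filter (fun w => G.Adj v w ∧ w ∈ p.support)) := by
    intro y hy
    rw [Finset.mem_filter] at hy
    rw [Finset.mem_union, Finset.mem_filter, Finset.mem_filter]
    by_cases hmem : y ∈ p.support
    · exact Or.inr ⟨hy.1, hy.2, hmem⟩
    · exact Or.inl ⟨hy.1, hy.2, hmem⟩
  have hv := hdeg v (hsupp v p.start_mem_support)
  have hle := (Finset.card_le_card hsub).trans (Finset.card_union_le _ _)
  omega

lemma sigma_cons_inj {u w v₁ v₂ : V} {h₁ : G.Adj w v₁} {h₂ : G.Adj w v₂}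
    {p₁ : G.Walk v₁ u} {p₂ : G.Walk v₂ u}
    (h : (⟨w, Walk.cons h₁ p₁⟩ : Σ v, G.Walk v u) = ⟨w, Walk.cons h₂ p₂⟩) :
    (⟨v₁, p₁⟩ : Σ v, G.Walk v u) = ⟨v₂, p₂⟩ := by
  have h2 : Walk.cons h₁ p₁ = Walk.cons h₂ p₂ := by injection h
  injection h2 with _ hv _ hp
  subst hv
  rw [eq_of_heq hp]

lemma pathFinset_card {t d : ℕ}
    (hgirth : ∀ (w : V) (c : G.Walk w w), c.IsCycle → 2 * t < c.length)
    {s : Finset V} (hdeg : ∀ v ∈ s, d < (s.filter (G.Adj v ·)).card)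
    {u : V} (hu : u ∈ s) :
    ∀ k, k ≤ t → d ^ k ≤ (pathFinset G s u k).card := by
  intro k
  induction k with
  | zero => intro _; simp [pathFinset]
  | succ k ihk =>
    intro hkt
    have hdisj : ∀ x ∈ pathFinset G s u k, ∀ y ∈ pathFinset G s u k, x ≠ y →
        Disjoint (extFinset G s x) (extFinset G s y) := by
      intro x hx y hy hxy
      rw [Finset.disjoint_left]
      intro z hzx hzy
      apply hxy
      rw [extFinset, Finset.mem_image] at hzx hzy
      obtain ⟨w₁, hw₁, rfl⟩ := hzx
      obtain ⟨w₂, hw₂, hz⟩ := hzy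
      obtain ⟨w₂v, hw₂m⟩ := w₂
      obtain ⟨w₁v, hw₁m⟩ := w₁
      have hfst : w₂v = w₁v := congrArg Sigma.fst hz
      subst hfst
      obtain ⟨v₁, p₁⟩ := x
      obtain ⟨v₂, p₂⟩ := y
      exact (sigma_cons_inj hz.symm)
    rw [pathFinset, Finset.card_biUnion hdisj]
    have hstep : (pathFinset G s u k).card • d
        ≤ ∑ x ∈ pathFinset G s u k, (extFinset G s x).card := by
      apply Finset.card_nsmul_le_sum
      intro x hx
      obtain ⟨h1, h2, h3⟩ := pathFinset_spec hu k x hx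
      exact extFinset_card hgirth hdeg x h1 (by omega) h3
    calc d ^ (k + 1) = d ^ k * d := pow_succ d k
      _ ≤ (pathFinset G s u k).card * d := Nat.mul_le_mul_right d (ihk (by omega))
      _ = (pathFinset G s u k).card • d := by rw [smul_eq_mul]
      _ ≤ _ := hstep


lemma ball_bound (G : SimpleGraph V) [DecidableRel G.Adj] (t d : ℕ)
    (hgirth : ∀ (w : V) (c : G.Walk w w), c.IsCycle → 2 * t < c.length)
    (s : Finset V) (hs : s.Nonempty) (hdeg : ∀ v ∈ s, d < (s.filter (G.Adj v ·)).card) :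
    d ^ t ≤ Fintype.card V := by
  obtain ⟨u, hu⟩ := hs
  have h1 : d ^ t ≤ (pathFinset G s u t).card := pathFinset_card hgirth hdeg hu t le_rfl
  have h2 : (pathFinset G s u t).card ≤ Fintype.card V := by
    rw [← Finset.card_univ]
    apply Finset.card_le_card_of_injOn (fun x => x.1) (fun _ _ => Finset.mem_univ _)
    intro x hx y hy hxy
    obtain ⟨hxp, hxl, -⟩ := pathFinset_spec hu t x (Finset.mem_coe.mp hx)
    obtain ⟨hyp, hyl, -⟩ := pathFinset_spec hu t y (Finset.mem_coe.mp hy)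
    obtain ⟨v₁, p⟩ := x
    obtain ⟨v₂, q⟩ := y
    dsimp only at hxy hxp hxl hyp hyl
    subst hxy
    by_cases hpq : p = q
    · rw [hpq]
    · exfalso
      obtain ⟨w, c, hc, hlen⟩ := cycle_of_two_paths _ p q hxp hyp hpq le_rfl
      have := hgirth w c hc
      omega
  exact h1.trans h2

lemma moore_nat (G : SimpleGraph V) [DecidableRel G.Adj] (t d : ℕ)
    (hgirth : ∀ (w : V) (c : G.Walk w w), c.IsCycle → 2 * t < c.length)
    (h : d * Fintype.card V < G.edgeFinset.card) : d ^ t ≤ Fintype.card V := by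
  have hdeg : ∀ v : V, ((Finset.univ : Finset V).filter (G.Adj v ·)).card = G.degree v := by
    intro v
    rw [SimpleGraph.degree]
    congr 1
    rw [neighborFinset_eq_filter]
  have h2 : ∑ v ∈ (Finset.univ : Finset V),
      ((Finset.univ : Finset V).filter (G.Adj v ·)).card = 2 * G.edgeFinset.card := by
    rw [Finset.sum_congr rfl (fun v _ => hdeg v)]
    exact G.sum_degrees_eq_twice_card_edges
  have hsum : 2 * d * (Finset.univ : Finset V).card
      < ∑ v ∈ (Finset.univ : Finset V), ((Finset.univ : Finset V).filter (G.Adj v ·)).card := by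
    rw [h2, Finset.card_univ, mul_assoc]
    omega
  obtain ⟨s, hs, hdeg'⟩ := exists_min_deg G d Finset.univ hsum
  exact ball_bound G t d hgirth s hs hdeg'

end PathCounting

/-- Moore bound: A graph on n vertices with no cycle of length ≤ 2t
(girth > 2t) has at most n^{1+1/t} + n edges. -/
theorem stmt15 {V : Type*} [Fintype V] [DecidableEq V]
    (G : SimpleGraph V) [DecidableRel G.Adj] (t : ℕ) (ht : 1 ≤ t)
    (hg : ((2 * t : ℕ) : ℕ∞) < G.girth) :
    (G.edgeFinset.card : ℝ) ≤
      (Fintype.card V : ℝ) ^ ((1 : ℝ) + 1 / (t : ℝ)) + (Fintype.card V : ℝ) := by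
  have hgirth : ∀ (w : V) (c : G.Walk w w), c.IsCycle → 2 * t < c.length := by
    intro w c hc
    have h1 : G.egirth ≤ c.length := le_egirth.mp le_rfl w c hc
    have h2 : G.girth ≤ c.length := by
      have := ENat.toNat_le_toNat h1 (by simp)
      simpa [SimpleGraph.girth] using this
    have h3 : 2 * t < G.girth := by exact_mod_cast hg
    omega
  rcases Nat.eq_zero_or_pos (Fintype.card V) with hn | hn
  · haveI : IsEmpty V := Fintype.card_eq_zero_iff.mp hn
    have he : G.edgeFinset = ∅ := Finset.eq_empty_of_isEmpty _
    rw [he, hn]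
    simp
    positivity
  · set n := Fintype.card V with hndef
    have hn0 : (0 : ℝ) < n := by exact_mod_cast hn
    set x : ℝ := (n : ℝ) ^ ((1 : ℝ) / (t : ℝ)) with hxdef
    have hx0 : 0 ≤ x := Real.rpow_nonneg (le_of_lt hn0) _
    have ht0 : (t : ℝ) ≠ 0 := by positivity
    set d : ℕ := ⌊x⌋₊ + 1 with hddef
    have hxd : x < d := by exact_mod_cast Nat.lt_floor_add_one x
    have hxt : x ^ t = (n : ℝ) := by
      rw [hxdef, ← Real.rpow_natCast (x := ((n : ℝ) ^ ((1 : ℝ) / (t : ℝ)))) t,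
        ← Real.rpow_mul (le_of_lt hn0)]
      rw [one_div, inv_mul_cancel₀ ht0, Real.rpow_one]
    have hdt : n < d ^ t := by
      have hcast : (n : ℝ) < (d : ℝ) ^ t := by
        rw [← hxt]
        exact pow_lt_pow_left₀ hxd hx0 (by omega)
      exact_mod_cast hcast
    have hmn : G.edgeFinset.card ≤ d * n := by
      by_contra hcon
      push_neg at hcon
      exact absurd (moore_nat G t d hgirth hcon) (by omega)
    have hd_le : (d : ℝ) ≤ x + 1 := by
      rw [hddef]
      push_cast
      have := Nat.floor_le hx0
      linarith
    calc (G.edgeFinset.card : ℝ) ≤ (d : ℝ) * n := by exact_mod_cast hmn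
      _ ≤ (x + 1) * n := by nlinarith
      _ = x * n + n := by ring
      _ = (n : ℝ) ^ ((1 : ℝ) + 1 / (t : ℝ)) + n := by
          have hh : (n : ℝ) ^ ((1 : ℝ) + 1 / (t : ℝ)) = x * n := by
            rw [Real.rpow_add hn0, Real.rpow_one, hxdef]
            ring
          rw [hh]
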